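/- Let n ≥ 3, l₁, l₂ ∈ {1,…,n−1} with l₁ + l₂ = n, and a ∈ ℂ with a^n ∉ {0, 1}. On the curve X: y^n = (x^n − 1)^{l₁}(x^n − a^n)^{l₂}, the map α(x, y) = (ω_n·a/x, −a^{l₂}(x^n − 1)(x^n − a^n)/(x^n·y)) maps points of X (with x ≠ 0, y ≠ 0) to points of X, and α does not commute with η(x,y) = (ω_n x, y). -/

import Mathlib

open Complex

/-- On `X : yⁿ = (xⁿ−1)^{l₁}(xⁿ−aⁿ)^{l₂}` with `l₁+l₂ = n`, the map
`α(x,y) = (ω a/x, −a^{l₂}(xⁿ−1)(xⁿ−aⁿ)/(xⁿ y))` preserves `X` and does not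
commute with `η(x,y) = (ω x, y)` (here `ω = e^{2πi/n}`, `n ≥ 3`). -/
theorem alpha_preserves_and_not_commutes (n l₁ l₂ : ℕ) (hn : 3 ≤ n)
    (hl₁ : 1 ≤ l₁) (hl₁' : l₁ ≤ n - 1) (hl₂ : 1 ≤ l₂) (hl₂' : l₂ ≤ n - 1)
    (hsum : l₁ + l₂ = n) (a : ℂ) (ha0 : a ^ n ≠ 0) (ha1 : a ^ n ≠ 1)
    (ω : ℂ) (hω : ω = Complex.exp (2 * (Real.pi : ℂ) * I / (n : ℂ))) :
    (∀ x y : ℂ, x ≠ 0 → y ≠ 0 →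
      y ^ n = (x ^ n - 1) ^ l₁ * (x ^ n - a ^ n) ^ l₂ →
      (-(a ^ l₂) * (x ^ n - 1) * (x ^ n - a ^ n) / (x ^ n * y)) ^ n =
        ((ω * a / x) ^ n - 1) ^ l₁ * ((ω * a / x) ^ n - a ^ n) ^ l₂) ∧
    ((fun p : ℂ × ℂ =>
        (ω * a / p.1,
          -(a ^ l₂) * (p.1 ^ n - 1) * (p.1 ^ n - a ^ n) / (p.1 ^ n * p.2))) ∘
      (fun p : ℂ × ℂ => (ω * p.1, p.2)) ≠
      (fun p : ℂ × ℂ => (ω * p.1, p.2)) ∘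
      (fun p : ℂ × ℂ =>
        (ω * a / p.1,
          -(a ^ l₂) * (p.1 ^ n - 1) * (p.1 ^ n - a ^ n) / (p.1 ^ n * p.2)))) := by
  have hn0 : n ≠ 0 := by omega
  have hprim : IsPrimitiveRoot ω n := by
    rw [hω]; exact Complex.isPrimitiveRoot_exp n hn0
  have hωn : ω ^ n = 1 := hprim.pow_eq_one
  have hω0 : ω ≠ 0 := hprim.ne_zero hn0
  have ha : a ≠ 0 := fun h => ha0 (by simp [h, zero_pow hn0])
  constructor
  · intro x y hx hy hX
    have hxn : x ^ n ≠ 0 := pow_ne_zero _ hx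
    have hyn : y ^ n ≠ 0 := pow_ne_zero _ hy
    have hωax : (ω * a / x) ^ n = a ^ n / x ^ n := by
      rw [div_pow, mul_pow, hωn, one_mul]
    rw [hωax]
    have hXne := hX ▸ hyn
    have h1 : x ^ n - 1 ≠ 0 := fun h => hXne (by rw [h, zero_pow (by omega)]; ring)
    have h2 : x ^ n - a ^ n ≠ 0 := fun h => hXne (by rw [h, zero_pow (by omega)]; ring)
    have e1 : a ^ n / x ^ n - 1 = -(x ^ n - a ^ n) / x ^ n := by field_simp; ring
    have e2 : a ^ n / x ^ n - a ^ n = -(a ^ n * (x ^ n - 1)) / x ^ n := by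
      field_simp; ring
    rw [e1, e2, div_pow, div_pow, div_pow, div_mul_div_comm, mul_pow (x^n) y n,
      div_eq_div_iff
        (mul_ne_zero (pow_ne_zero _ hxn) hyn)
        (mul_ne_zero (pow_ne_zero _ hxn) (pow_ne_zero _ hxn))]
    subst hsum
    simp only [neg_mul]
    rw [neg_pow (a ^ l₂ * (x ^ (l₁ + l₂) - 1) * (x ^ (l₁ + l₂) - a ^ (l₁ + l₂))),
      neg_pow (x ^ (l₁ + l₂) - a ^ (l₁ + l₂)) l₁,
      neg_pow (a ^ (l₁ + l₂) * (x ^ (l₁ + l₂) - 1)) l₂, hX]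
    simp only [mul_pow, pow_add]
    ring
  · intro hcon
    have h1 := congrArg (fun f => (f ((1:ℂ), (1:ℂ))).1) hcon
    simp only [Function.comp_apply] at h1
    have hω2 : ω ^ 2 ≠ 1 := hprim.pow_ne_one_of_pos_of_lt (by norm_num) (by omega)
    apply hω2
    field_simp at h1
    have h2 : (ω ^ 2 - 1) * a = 0 := by linear_combination -a * h1
    rcases mul_eq_zero.1 h2 with h | h
    · exact sub_eq_zero.1 h
    · exact absurd h ha
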